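/- Let C be a nonempty finite type with a free additive action of ℤ/3ℤ, let Q be the quotient of C by the orbit equivalence relation with quotient map π, and for c, c' in the same orbit let sh(c,c') be the unique k ∈ ℤ/3ℤ with k +ᵥ c = c'. For an equivariant permutation f : C ≃ C with induced permutation f̄ of Q, define sh(f) = ∑_{v ∈ Q} sh(f(φ(v)), φ(f̄(v))) for a (any) section φ : Q → C of π. Then there exists an equivariant permutation f of C with sh(f) = 1; in particular sh is a nontrivial homomorphism to ℤ/3ℤ. -/

import Mathlib

open scoped Classical

/-- The shift `sh c c'`: the (under a free action, unique) element `k : ZMod 3`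
with `k +ᵥ c = c'`, when `c` and `c'` lie in the same orbit; junk value `0`
otherwise. -/
noncomputable def sh {C : Type*} [AddAction (ZMod 3) C] (c c' : C) : ZMod 3 :=
  if h : ∃ k : ZMod 3, k +ᵥ c = c' then h.choose else 0

lemma sh_vadd {C : Type*} [AddAction (ZMod 3) C]
    (hfree : ∀ (k : ZMod 3) (c : C), k +ᵥ c = c → k = 0)
    (c : C) (k : ZMod 3) : sh c (k +ᵥ c) = k := by
  have h : ∃ m : ZMod 3, m +ᵥ c = k +ᵥ c := ⟨k, rfl⟩
  rw [sh, dif_pos h]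
  have hs := h.choose_spec
  have : (-k + h.choose) +ᵥ c = c := by
    rw [add_vadd, hs, ← add_vadd, neg_add_cancel, zero_vadd]
  have h0 := hfree _ _ this
  have : k + (-k + h.choose) = k + 0 := by rw [h0]
  rwa [← add_assoc, add_neg_cancel, zero_add, add_zero] at this

/-- Theorem 4.3(iv): on a nonempty `C`, there exists an equivariant permutation `f`
with total shift `sh f = 1`; in particular `sh` is nontrivial. -/
theorem exists_equivariant_sum_sh_eq_one
    {C : Type*} [Finite C] [Nonempty C] [AddAction (ZMod 3) C]
    (hfree : ∀ (k : ZMod 3) (c : C), k +ᵥ c = c → k = 0) :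
    ∃ f : Equiv.Perm C,
      (∀ (k : ZMod 3) (c : C), f (k +ᵥ c) = k +ᵥ f c) ∧
      ∀ fbar : Equiv.Perm (Quotient (AddAction.orbitRel (ZMod 3) C)),
        (∀ c : C,
          Quotient.mk (AddAction.orbitRel (ZMod 3) C) (f c)
            = fbar (Quotient.mk (AddAction.orbitRel (ZMod 3) C) c)) →
        ∀ φ : Quotient (AddAction.orbitRel (ZMod 3) C) → C,
          (∀ q, Quotient.mk (AddAction.orbitRel (ZMod 3) C) (φ q) = q) →
          ∑ᶠ q, sh (f (φ q)) (φ (fbar q)) = 1 := by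
  obtain ⟨c₀⟩ := ‹Nonempty C›
  set Q := Quotient (AddAction.orbitRel (ZMod 3) C)
  set pr : C → Q := Quotient.mk (AddAction.orbitRel (ZMod 3) C) with hpr
  have hvadd : ∀ (k : ZMod 3) (c : C), pr (k +ᵥ c) = pr c := by
    intro k c
    exact Quotient.sound ⟨k, rfl⟩
  set q₀ : Q := pr c₀ with hq₀
  refine ⟨⟨fun c => if pr c = q₀ then (-1 : ZMod 3) +ᵥ c else c,
          fun c => if pr c = q₀ then (1 : ZMod 3) +ᵥ c else c, ?_, ?_⟩, ?_, ?_⟩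
  · intro c
    by_cases h : pr c = q₀ <;> simp [h, hvadd, ← add_vadd]
  · intro c
    by_cases h : pr c = q₀ <;> simp [h, hvadd, ← add_vadd]
  · intro k c
    by_cases h : pr c = q₀ <;>
      simp [Equiv.coe_fn_mk, hvadd, h, ← add_vadd, add_comm]
  · intro fbar hfbar φ hφ
    have hfix : ∀ c : C, pr ((if pr c = q₀ then (-1 : ZMod 3) +ᵥ c else c)) = pr c := by
      intro c
      by_cases h : pr c = q₀ <;> simp [h, hvadd]
    have hbar : ∀ q : Q, fbar q = q := by
      intro q
      induction q using Quotient.ind with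
      | _ c => rw [← hfbar c]; exact hfix c
    haveI : Finite Q := Quotient.finite _
    haveI : Fintype Q := Fintype.ofFinite Q
    have key : ∀ q : Q, sh ((⟨fun c => if pr c = q₀ then (-1 : ZMod 3) +ᵥ c else c,
          fun c => if pr c = q₀ then (1 : ZMod 3) +ᵥ c else c,
          by intro c; by_cases h : pr c = q₀ <;> simp [h, hvadd, ← add_vadd],
          by intro c; by_cases h : pr c = q₀ <;> simp [h, hvadd, ← add_vadd]⟩ :
            Equiv.Perm C) (φ q)) (φ (fbar q)) = if q = q₀ then 1 else 0 := by
      intro q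
      rw [hbar q]
      by_cases h : q = q₀
      · subst h
        have hc : pr (φ q₀) = q₀ := hφ q₀
        simp only [Equiv.coe_fn_mk, hc, if_true]
        have := sh_vadd hfree ((-1 : ZMod 3) +ᵥ φ q₀) 1
        rwa [← add_vadd, show (1:ZMod 3) + -1 = 0 by norm_num, zero_vadd] at this
      · have hc : pr (φ q) ≠ q₀ := by rw [hφ q]; exact h
        simp only [Equiv.coe_fn_mk, hc, if_false, h]
        have : φ q = (0 : ZMod 3) +ᵥ φ q := by rw [zero_vadd]
        conv_lhs => rw [show sh (φ q) (φ q) = sh (φ q) ((0:ZMod 3) +ᵥ φ q) by rw [zero_vadd]]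
        exact sh_vadd hfree _ 0
    rw [finsum_eq_sum_of_fintype]
    calc ∑ q : Q, _ = ∑ q : Q, if q = q₀ then (1 : ZMod 3) else 0 :=
          Finset.sum_congr rfl (fun q _ => key q)
      _ = 1 := by
        convert (Finset.sum_ite_eq' Finset.univ q₀ (fun _ => (1:ZMod 3))) using 1
        simp
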